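/- Let K be a finite abstract simplicial complex on n vertices, viewed as a subcomplex of the standard (n-1)-simplex Δ_{n-1}, let F be a field, and let d ≥ 0. Then there exists a simplicial complex K' obtained from K by adding simplices of dimension at most d (faces of Δ_{n-1}) such that H̃_i(K', F) = 0 for all i ≤ d-1, and H̃_i(K', F) ≅ H̃_i(K, F) for all i ≥ d. -/

import Mathlib

open Finset

/-- The faces of an abstract simplicial complex: a set of nonempty finite sets of
vertices, closed under taking nonempty subsets. -/
def IsComplex {V : Type*} (S : Set (Finset V)) : Prop :=
  (∀ s ∈ S, s.Nonempty) ∧ ∀ s ∈ S, ∀ t ⊆ s, t.Nonempty → t ∈ S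

/-- The nerve of a collection `Γ` of (sub)complexes, as a set of finsets of the index
type: the simplices are the nonempty subcollections with a common face. -/
def nerveC {ι V : Type*} (Γ : ι → Set (Finset V)) : Set (Finset ι) :=
  {σ | σ.Nonempty ∧ (⋂ i ∈ (σ : Finset ι), Γ i).Nonempty}

/-- Simplicial `n`-chains (dimension `n`, i.e. on vertex sets of cardinality `n+1`)
on the vertex type `V`, with coefficients in `A`. -/
abbrev Chains (A V : Type*) [AddCommGroup A] [LinearOrder V] (n : ℕ) : Type _ :=
  {s : Finset V // s.card = n + 1} →₀ A

variable (R : Type*) [CommRing R] (A : Type*) [AddCommGroup A] [Module R A]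
variable (V : Type*) [LinearOrder V]

/-- The simplicial boundary map, with the usual alternating signs determined by the
linear order on the vertices. -/
noncomputable def bdry (n : ℕ) : Chains A V (n + 1) →ₗ[R] Chains A V n :=
  Finsupp.lsum R fun s =>
    ∑ v ∈ (s : Finset V).attach,
      ((-1 : ℤ) ^ (((s : Finset V).filter (fun w => w < v.1)).card)) •
        (Finsupp.lsingle (R := R) ⟨(s : Finset V).erase v.1, by
          rw [Finset.card_erase_of_mem v.2, s.2]; rfl⟩)

/-- The augmentation map on `0`-chains. -/
noncomputable def aug : Chains A V 0 →ₗ[R] A :=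
  Finsupp.lsum R fun _ => LinearMap.id

/-- Reduced cycles: kernel of the boundary map, resp. of the augmentation in degree 0. -/
noncomputable def cycles : (n : ℕ) → Submodule R (Chains A V n)
  | 0 => LinearMap.ker (aug R A V)
  | (n + 1) => LinearMap.ker (bdry R A V n)

/-- Chains supported on the simplices belonging to `S`. -/
def chainsIn (S : Set (Finset V)) (n : ℕ) : Submodule R (Chains A V n) :=
  Finsupp.supported A R {s : {s : Finset V // s.card = n + 1} | ↑s ∈ S}

/-- Reduced cycles of the complex `S`. -/
noncomputable def cyclesIn (S : Set (Finset V)) (n : ℕ) : Submodule R (Chains A V n) :=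
  cycles R A V n ⊓ chainsIn R A V S n

/-- Boundaries of chains of the complex `S`. -/
noncomputable def boundariesIn (S : Set (Finset V)) (n : ℕ) : Submodule R (Chains A V n) :=
  Submodule.map (bdry R A V n) (chainsIn R A V S (n + 1))

/-- Reduced simplicial homology of the complex `S` in degree `n ≥ 0`,
with coefficients in the `R`-module `A`. -/
noncomputable abbrev redH (S : Set (Finset V)) (n : ℕ) : Type _ :=
  (cyclesIn R A V S n) ⧸
    (Submodule.comap (cyclesIn R A V S n).subtype (boundariesIn R A V S n))

/-- Vanishing of the reduced homology of `S` in degree `n : ℤ`, with the convention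
that `H̃₋₁(S) = 0` iff `S` is nonempty (and trivial vanishing below degree `-1`). -/
def RedHVanish (S : Set (Finset V)) (n : ℤ) : Prop :=
  if n < -1 then True
  else if n = -1 then S.Nonempty
  else Subsingleton (redH R A V S n.toNat)

open scoped Classical in
/-- The dimension (rank) of the reduced homology of `S` in degree `n : ℤ`; in degree `-1`
it is `0` iff `S` is nonempty, in accordance with the convention. -/
noncomputable def redHRank (S : Set (Finset V)) (n : ℤ) : Cardinal :=
  if n < -1 then 0
  else if n = -1 then (if S.Nonempty then (0 : Cardinal) else 1)
  else Module.rank R (redH R A V S n.toNat)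



section Work
variable {F : Type*} [Field F] {V : Type*} [LinearOrder V]

noncomputable def sgl (n : ℕ) (u : Finset V) (a : F) : Chains F V n :=
  if h : u.card = n + 1 then Finsupp.single ⟨u, h⟩ a else 0

lemma sgl_of_card {n : ℕ} {u : Finset V} (h : u.card = n + 1) (a : F) :
    sgl n u a = Finsupp.single ⟨u, h⟩ a := dif_pos h

lemma bdry_single {n : ℕ} (s : {s : Finset V // s.card = n + 1 + 1}) (a : F) :
    bdry F F V n (Finsupp.single s a)
      = ∑ v ∈ (s : Finset V),
          ((-1 : ℤ) ^ (((s : Finset V).filter (fun w => w < v)).card)) •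
            sgl n ((s : Finset V).erase v) a := by
  rw [bdry, Finsupp.lsum_single, LinearMap.sum_apply]
  rw [← Finset.sum_attach (s : Finset V)
    (fun v => ((-1 : ℤ) ^ (((s : Finset V).filter (fun w => w < v)).card)) •
      sgl n ((s : Finset V).erase v) a)]
  refine Finset.sum_congr rfl fun v _ => ?_
  rw [LinearMap.smul_apply, Finsupp.lsingle_apply,
    sgl_of_card (by rw [Finset.card_erase_of_mem v.2, s.2]; rfl)]

variable (v₀ : V)

noncomputable def cone (n : ℕ) : Chains F V n →ₗ[F] Chains F V (n + 1) :=
  Finsupp.lsum F fun s =>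
    if h : v₀ ∈ (s : Finset V) then 0 else
      ((-1 : ℤ) ^ (((s : Finset V).filter (fun w => w < v₀)).card)) •
        (Finsupp.lsingle (R := F) ⟨insert v₀ (s : Finset V), by
          rw [Finset.card_insert_of_notMem h, s.2]⟩)

lemma cone_sgl {n : ℕ} {u : Finset V} (h : u.card = n + 1) (a : F) :
    cone v₀ n (sgl n u a)
      = if v₀ ∈ u then 0 else
          ((-1 : ℤ) ^ ((u.filter (fun w => w < v₀)).card)) • sgl (n + 1) (insert v₀ u) a := by
  rw [sgl_of_card h, cone, Finsupp.lsum_single]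
  by_cases hv : v₀ ∈ u
  · simp [dif_pos, hv]
  · rw [dif_neg hv, if_neg hv, LinearMap.smul_apply, Finsupp.lsingle_apply,
      sgl_of_card (by rw [Finset.card_insert_of_notMem hv, h])]

lemma cone_single {n : ℕ} (s : {s : Finset V // s.card = n + 1}) (a : F) :
    cone v₀ n (Finsupp.single s a)
      = if v₀ ∈ (s : Finset V) then 0 else
          ((-1 : ℤ) ^ (((s : Finset V).filter (fun w => w < v₀)).card)) •
            sgl (n + 1) (insert v₀ (s : Finset V)) a := by
  rw [← sgl_of_card s.2 a, cone_sgl v₀ s.2]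

-- sign lemmas
lemma filter_lt_insert_self {s : Finset V} (hv : v₀ ∉ s) :
    ((insert v₀ s).filter (fun w => w < v₀)).card = (s.filter (fun w => w < v₀)).card := by
  rw [Finset.filter_insert, if_neg (lt_irrefl v₀)]

lemma sign_key {s : Finset V} {v : V} (hv : v ∈ s) (hv₀ : v₀ ∉ s) :
    ((-1 : ℤ) ^ ((s.filter (fun w => w < v₀)).card
        + (((insert v₀ s).filter (fun w => w < v)).card))
      = -(-1 : ℤ) ^ ((s.filter (fun w => w < v)).card
        + (((s.erase v).filter (fun w => w < v₀)).card))) := by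
  have hne : v ≠ v₀ := fun h => hv₀ (h ▸ hv)
  have h1 : ((s.erase v).filter (fun w => w < v₀)) = (s.filter (fun w => w < v₀)).erase v :=
    Finset.filter_erase _ _ _
  rcases lt_or_gt_of_ne hne with hlt | hgt
  · -- v < v₀
    have hins : ((insert v₀ s).filter (fun w => w < v)) = s.filter (fun w => w < v) := by
      rw [Finset.filter_insert, if_neg (not_lt.2 hlt.le)]
    have hmem : v ∈ s.filter (fun w => w < v₀) := Finset.mem_filter.2 ⟨hv, hlt⟩
    have herase : ((s.filter (fun w => w < v₀)).erase v).card
        = (s.filter (fun w => w < v₀)).card - 1 := Finset.card_erase_of_mem hmem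
    have hpos : 0 < (s.filter (fun w => w < v₀)).card := Finset.card_pos.2 ⟨v, hmem⟩
    obtain ⟨k, hk⟩ : ∃ k, (s.filter (fun w => w < v₀)).card = k + 1 :=
      ⟨_, (Nat.succ_pred_eq_of_pos hpos).symm⟩
    rw [hins, h1, herase, hk]
    simp only [Nat.add_sub_cancel]
    rw [pow_add, pow_add, pow_succ]
    ring
  · -- v₀ < v
    have hins : ((insert v₀ s).filter (fun w => w < v)).card
        = (s.filter (fun w => w < v)).card + 1 := by
      rw [Finset.filter_insert, if_pos hgt,
        Finset.card_insert_of_notMem (fun h => hv₀ (Finset.mem_filter.1 h).1)]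
    have herase : (s.filter (fun w => w < v₀)).erase v = s.filter (fun w => w < v₀) :=
      Finset.erase_eq_of_notMem (fun h => absurd (Finset.mem_filter.1 h).2 (not_lt.2 hgt.le))
    rw [hins, h1, herase, pow_add, pow_add, pow_succ]
    ring

lemma p_erase_self {s : Finset V} :
    ((s.erase v₀).filter (fun w => w < v₀)) = s.filter (fun w => w < v₀) := by
  rw [Finset.filter_erase]
  exact Finset.erase_eq_of_notMem (fun h => absurd (Finset.mem_filter.1 h).2 (lt_irrefl v₀))

lemma even_sign_smul {M : Type*} [AddCommGroup M] (k : ℕ) (x : M) :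
    ((-1 : ℤ) ^ k) • (((-1 : ℤ) ^ k) • x) = x := by
  rw [smul_smul, ← pow_add, Even.neg_one_pow ⟨k, by ring⟩, one_smul]

lemma sgl_coe {n : ℕ} (s : {s : Finset V // s.card = n + 1}) (a : F) :
    sgl n (s : Finset V) a = Finsupp.single s a := by
  rw [sgl_of_card s.2]

lemma bdry_sgl {n : ℕ} {u : Finset V} (hu : u.card = n + 2) (a : F) :
    bdry F F V n (sgl (n + 1) u a)
      = ∑ v ∈ u, ((-1 : ℤ) ^ ((u.filter (fun w => w < v)).card)) • sgl n (u.erase v) a := by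
  rw [sgl_of_card (show u.card = (n+1)+1 from hu), bdry_single]

lemma homotopy_sgl (n : ℕ) (u : Finset V) (hu : u.card = n + 2) (a : F) :
    bdry F F V (n + 1) (cone v₀ (n + 1) (sgl (n + 1) u a))
      + cone v₀ n (bdry F F V n (sgl (n + 1) u a)) = sgl (n + 1) u a := by
  rw [bdry_sgl hu, cone_sgl v₀ hu, map_sum]
  by_cases hv : v₀ ∈ u
  · rw [if_pos hv, map_zero, zero_add]
    rw [Finset.sum_eq_single v₀ (fun v hvs hne => ?_) (fun h => absurd hv h)]
    · rw [map_zsmul, cone_sgl v₀ (by rw [Finset.card_erase_of_mem hv, hu]; rfl),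
        if_neg (fun h => (Finset.mem_erase.1 h).1 rfl), p_erase_self,
        Finset.insert_erase hv, even_sign_smul]
    · rw [map_zsmul, cone_sgl v₀ (by rw [Finset.card_erase_of_mem hvs, hu]; rfl),
        if_pos (Finset.mem_erase.2 ⟨fun h => hne h.symm, hv⟩), smul_zero]
  · rw [if_neg hv, map_zsmul,
      bdry_sgl (show (insert v₀ u).card = (n+1)+2 by rw [Finset.card_insert_of_notMem hv, hu]),
      Finset.sum_insert hv, filter_lt_insert_self v₀ hv, Finset.erase_insert hv,
      smul_add, even_sign_smul]
    rw [add_assoc]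
    nth_rewrite 2 [show sgl (n+1) u a = sgl (n+1) u a + 0 by rw [add_zero]]
    congr 1
    rw [Finset.smul_sum, ← Finset.sum_add_distrib]
    refine Finset.sum_eq_zero fun v hvs => ?_
    rw [Finset.erase_insert_of_ne (fun h => hv (by rw [h]; exact hvs)), map_zsmul,
      cone_sgl v₀ (by rw [Finset.card_erase_of_mem hvs, hu]; rfl),
      if_neg (fun h => hv (Finset.mem_of_mem_erase h))]
    rw [smul_smul, smul_smul, ← pow_add, ← pow_add, sign_key v₀ hvs hv, neg_smul,
      neg_add_cancel]

lemma cone_homotopy_succ (n : ℕ) (c : Chains F V (n + 1)) :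
    bdry F F V (n + 1) (cone v₀ (n + 1) c) + cone v₀ n (bdry F F V n c) = c := by
  induction c using Finsupp.induction_linear with
  | zero => simp
  | add f g hf hg =>
      simp only [map_add]
      conv_rhs => rw [← hf, ← hg]
      abel
  | single s a =>
      rw [← sgl_coe s a]
      exact homotopy_sgl v₀ n (s : Finset V) s.2 a

lemma aug_single {s : {s : Finset V // s.card = 0 + 1}} {a : F} :
    aug F F V (Finsupp.single s a) = a := by
  rw [aug, Finsupp.lsum_single]; rfl

lemma sgl_add {n : ℕ} (u : Finset V) (a b : F) :
    sgl n u (a + b) = sgl n u a + sgl n u b := by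
  unfold sgl
  split
  · rw [Finsupp.single_add]
  · rw [add_zero]

lemma homotopy_sgl_zero (u : Finset V) (hu : u.card = 1) (a : F) :
    bdry F F V 0 (cone v₀ 0 (sgl 0 u a)) = sgl 0 u a - sgl 0 {v₀} a := by
  obtain ⟨x, rfl⟩ := Finset.card_eq_one.1 hu
  by_cases hvx : v₀ ∈ ({x} : Finset V)
  · obtain rfl := Finset.mem_singleton.1 hvx
    rw [cone_sgl v₀ hu, if_pos hvx, map_zero, sub_self]
  · rw [cone_sgl v₀ hu, if_neg hvx, map_zsmul,
      bdry_sgl (show (insert v₀ ({x} : Finset V)).card = 0 + 2 by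
        rw [Finset.card_insert_of_notMem hvx, hu]),
      Finset.sum_insert hvx, filter_lt_insert_self v₀ hvx, Finset.erase_insert hvx,
      smul_add, even_sign_smul, Finset.sum_singleton,
      Finset.erase_insert_of_ne (fun h => hvx (by rw [h]; exact Finset.mem_singleton_self x)),
      Finset.erase_singleton, smul_smul, ← pow_add,
      sign_key v₀ (Finset.mem_singleton_self x) hvx]
    have h1 : (Finset.filter (fun w => w < x) {x}).card = 0 := by
      simp [Finset.filter_singleton]
    have h2 : (Finset.filter (fun w => w < v₀) (({x} : Finset V).erase x)).card = 0 := by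
      rw [Finset.erase_singleton]; simp
    rw [h1, h2, pow_zero, neg_smul, one_smul, ← sub_eq_add_neg,
      show (insert v₀ (∅ : Finset V)) = {v₀} from rfl]

lemma cone_homotopy_zero (c : Chains F V 0) :
    bdry F F V 0 (cone v₀ 0 c) = c - sgl 0 {v₀} (aug F F V c) := by
  induction c using Finsupp.induction_linear with
  | zero => simp [sgl]
  | add f g hf hg =>
      rw [map_add, map_add, hf, hg, map_add, sgl_add]
      abel
  | single s a =>
      rw [aug_single, ← sgl_coe s a]
      exact homotopy_sgl_zero v₀ (s : Finset V) s.2 a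

-- support infrastructure
lemma mem_chainsIn {S : Set (Finset V)} {n : ℕ} {c : Chains F V n} :
    c ∈ chainsIn F F V S n ↔ ∀ s ∈ c.support, (s : Finset V) ∈ S := by
  rw [chainsIn, Finsupp.mem_supported]
  constructor
  · exact fun h s hs => h hs
  · exact fun h s hs => h s hs

lemma single_mem_chainsIn {S : Set (Finset V)} {n : ℕ} {s : {s : Finset V // s.card = n + 1}}
    (h : (s : Finset V) ∈ S) (a : F) : Finsupp.single s a ∈ chainsIn F F V S n :=
  Finsupp.single_mem_supported F a h

lemma sgl_mem_chainsIn {S : Set (Finset V)} {n : ℕ} {u : Finset V}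
    (h : u ∈ S) (a : F) : sgl n u a ∈ chainsIn F F V S n := by
  unfold sgl
  split
  · exact single_mem_chainsIn h a
  · exact Submodule.zero_mem _

lemma chainsIn_congr {S T : Set (Finset V)} {n : ℕ}
    (h : ∀ s : Finset V, s.card = n + 1 → (s ∈ S ↔ s ∈ T)) :
    chainsIn F F V S n = chainsIn F F V T n := by
  unfold chainsIn
  congr 1
  exact Set.ext fun s => h (s : Finset V) s.2

lemma chainsIn_mono {S T : Set (Finset V)} (hST : S ⊆ T) (n : ℕ) :
    chainsIn F F V S n ≤ chainsIn F F V T n :=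
  Finsupp.supported_mono (fun s hs => hST hs)

lemma map_chainsIn_le {S T : Set (Finset V)} {n m : ℕ} (f : Chains F V n →ₗ[F] Chains F V m)
    (h : ∀ s : {s : Finset V // s.card = n + 1}, (s : Finset V) ∈ S →
      f (Finsupp.single s 1) ∈ chainsIn F F V T m) :
    ∀ c ∈ chainsIn F F V S n, f c ∈ chainsIn F F V T m := by
  intro c hc
  have : chainsIn F F V S n ≤ Submodule.comap f (chainsIn F F V T m) := by
    rw [chainsIn, Finsupp.supported_eq_span_single, Submodule.span_le]
    rintro _ ⟨s, hs, rfl⟩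
    exact h s hs
  exact this hc

/-- The full complex on the vertices of `K`. -/
def fullOn (K : Set (Finset V)) : Set (Finset V) :=
  {s | s.Nonempty ∧ ∀ v ∈ s, {v} ∈ K}

lemma cone_mem_chainsIn {K : Set (Finset V)} (hv₀ : ({v₀} : Finset V) ∈ K) {n : ℕ}
    {c : Chains F V n} (hc : c ∈ chainsIn F F V (fullOn K) n) :
    cone v₀ n c ∈ chainsIn F F V (fullOn K) (n + 1) := by
  refine map_chainsIn_le (cone v₀ n) (fun s hs => ?_) c hc
  rw [cone_single]
  split
  · exact Submodule.zero_mem _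
  · refine Submodule.smul_of_tower_mem _ _
      (sgl_mem_chainsIn (⟨Finset.insert_nonempty _ _, ?_⟩ : insert v₀ _ ∈ fullOn K) 1)
    intro v hv
    rcases Finset.mem_insert.1 hv with rfl | hv
    · exact hv₀
    · exact hs.2 v hv

lemma cycle_eq_bdry_cone {n : ℕ} {c : Chains F V n} (hc : c ∈ cycles F F V n) :
    bdry F F V n (cone v₀ n c) = c := by
  cases n with
  | zero =>
      rw [cone_homotopy_zero]
      have : aug F F V c = 0 := hc
      rw [this]
      unfold sgl
      split <;> simp
  | succ n =>
      have h := cone_homotopy_succ v₀ n c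
      have hz : bdry F F V n c = 0 := hc
      rw [hz, map_zero, add_zero] at h
      exact h

-- homological algebra transport
lemma redH_transport {M : Type*} [AddCommGroup M] [Module F M]
    {p q B C : Submodule F M} (hpq : p = q) (hBC : B = C) :
    Nonempty ((p ⧸ Submodule.comap p.subtype B) ≃ₗ[F] (q ⧸ Submodule.comap q.subtype C)) := by
  subst hpq; subst hBC; exact ⟨LinearEquiv.refl _ _⟩

lemma redH_subsingleton {S : Set (Finset V)} {n : ℕ}
    (h : cyclesIn F F V S n ≤ boundariesIn F F V S n) :
    Subsingleton (redH F F V S n) := by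
  rw [Submodule.Quotient.subsingleton_iff, Submodule.eq_top_iff']
  exact fun x => h x.2

end Work


/-- Homology-killing lemma: one can attach simplices of dimension at most `d` (faces of
the full simplex on the vertices of `K`) so as to kill all homology in degrees `≤ d-1`
while keeping the homology in degrees `≥ d` unchanged. -/
theorem homology_killing {V : Type*} [LinearOrder V] [Fintype V]
    (F : Type*) [Field F]
    (K : Set (Finset V)) (hK : IsComplex K) (hne : K.Nonempty) (d : ℕ) :
    ∃ K' : Set (Finset V), IsComplex K' ∧ K ⊆ K' ∧
      (∀ s ∈ K', ∀ v ∈ s, {v} ∈ K) ∧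
      (∀ s ∈ K', s ∉ K → s.card ≤ d + 1) ∧
      (∀ i : ℤ, i ≤ (d : ℤ) - 1 → RedHVanish F F V K' i) ∧
      (∀ i : ℕ, d ≤ i → Nonempty (redH F F V K' i ≃ₗ[F] redH F F V K i)) := by
  classical
  have hvertK : ∀ s ∈ K, ∀ v ∈ s, ({v} : Finset V) ∈ K := fun s hs v hv =>
    hK.2 s hs {v} (Finset.singleton_subset_iff.2 hv) (Finset.singleton_nonempty v)
  cases d with
  | zero =>
      refine ⟨K, hK, subset_rfl, hvertK, fun s hs h => absurd hs h, fun i hi => ?_,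
        fun i _ => ⟨LinearEquiv.refl _ _⟩⟩
      unfold RedHVanish
      split_ifs with h1 h2
      all_goals first | trivial | exact hne | exact (by omega : False).elim
  | succ e =>
      -- set-up
      obtain ⟨s₀, hs₀⟩ := hne
      obtain ⟨v₀, hv₀mem⟩ := hK.1 s₀ hs₀
      have hv₀ : ({v₀} : Finset V) ∈ K := hvertK s₀ hs₀ v₀ hv₀mem
      set Bd : Submodule F (Chains F V e) := boundariesIn F F V K e with hBd
      set π : Chains F V e →ₗ[F] (Chains F V e ⧸ Bd) := Bd.mkQ with hπ
      set w : {s : Finset V // s.card = e + 1 + 1} → Chains F V e :=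
        fun s => bdry F F V e (Finsupp.single s 1) with hw
      set A : Set (Chains F V e ⧸ Bd) :=
        {y | ∃ s : {s : Finset V // s.card = e + 1 + 1},
          (s : Finset V) ∈ fullOn K ∧ π (w s) = y} with hA
      obtain ⟨t, htA, hsp, hli⟩ := exists_linearIndependent F A
      choose σ hσFull hσπ using fun (y : t) => htA y.2
      set K' : Set (Finset V) := K ∪ {u | u.Nonempty ∧ u.card ≤ e + 1 ∧ ∀ v ∈ u, {v} ∈ K}
        ∪ {u | ∃ y : t, u = ↑(σ y)} with hK'
      have hKsub : K ⊆ K' := fun u hu => Or.inl (Or.inl hu)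
      have hvert : ∀ s ∈ K', ∀ v ∈ s, ({v} : Finset V) ∈ K := by
        rintro s (⟨hs | hs⟩ | ⟨y, rfl⟩) v hv
        · exact hvertK s hs v hv
        · exact hs.2.2 v hv
        · exact (hσFull y).2 v hv
      have hK'Full : K' ⊆ fullOn K := by
        rintro s hs
        refine ⟨?_, hvert s hs⟩
        rcases hs with (⟨hs | hs⟩ | ⟨y, rfl⟩)
        · exact hK.1 s hs
        · exact hs.1
        · exact (hσFull y).1
      have hcard : ∀ s ∈ K', s ∉ K → s.card ≤ e + 1 + 1 := by
        rintro s (⟨hs | hs⟩ | ⟨y, rfl⟩) hns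
        · exact absurd hs hns
        · exact hs.2.1.trans (Nat.le_succ _)
        · exact le_of_eq (σ y).2
      have hcplx : IsComplex K' := by
        constructor
        · exact fun s hs => (hK'Full hs).1
        · rintro s hs u hus hu
          rcases hs with (⟨hs | hs⟩ | ⟨y, rfl⟩)
          · exact hKsub (hK.2 s hs u hus hu)
          · exact Or.inl (Or.inr ⟨hu, le_trans (Finset.card_le_card hus) hs.2.1,
              fun v hv => hs.2.2 v (hus hv)⟩)
          · rcases Nat.lt_or_ge u.card (e + 1 + 1) with hc | hc
            · exact Or.inl (Or.inr ⟨hu, Nat.lt_succ_iff.1 hc,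
                fun v hv => (hσFull y).2 v (hus hv)⟩)
            · exact Or.inr ⟨y, Finset.eq_of_subset_of_card_le hus
                (by rw [(σ y).2]; exact hc)⟩
      -- chain-level facts
      have hch_low : ∀ n : ℕ, n ≤ e →
          chainsIn F F V K' n = chainsIn F F V (fullOn K) n := by
        intro n hn
        refine chainsIn_congr fun u hu => ⟨fun h => hK'Full h, fun h => ?_⟩
        exact Or.inl (Or.inr ⟨h.1, by omega, h.2⟩)
      have hch_high : ∀ n : ℕ, e + 2 ≤ n →
          chainsIn F F V K' n = chainsIn F F V K n := by
        intro n hn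
        refine chainsIn_congr fun u hu => ⟨fun h => ?_, fun h => hKsub h⟩
        rcases h with (⟨h | h⟩ | ⟨y, rfl⟩)
        · exact h
        · exact absurd h.2.1 (by omega)
        · exact absurd (σ y).2 (by omega)
      have hch_mid : chainsIn F F V K' (e + 1) ≤ chainsIn F F V K (e + 1) ⊔
          Finsupp.supported F F
            {s : {s : Finset V // s.card = e + 1 + 1} | ∃ y : t, (s : Finset V) = ↑(σ y)} := by
        unfold chainsIn
        rw [← Finsupp.supported_union]
        apply Finsupp.supported_mono
        rintro s hs
        rcases hs with (⟨h | h⟩ | ⟨y, hy⟩)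
        · exact Or.inl h
        · exact absurd h.2.1 (by have := s.2; omega)
        · exact Or.inr ⟨y, hy⟩
      -- cycles in middle degree unchanged
      have hZmid : cyclesIn F F V K' (e + 1) = cyclesIn F F V K (e + 1) := by
        apply le_antisymm
        · intro c hc
          unfold cyclesIn at hc ⊢
          rw [Submodule.mem_inf] at hc ⊢
          obtain ⟨hcyc, hch⟩ := hc
          obtain ⟨c₁, hc₁, c₂, hc₂, rfl⟩ := Submodule.mem_sup.1 (hch_mid hch)
          have hc₂span : c₂ ∈ Submodule.span F
              (Set.range fun y : t => Finsupp.single (σ y) (1 : F)) := by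
            have h1 := Finsupp.supported_eq_span_single F
              {s : {s : Finset V // s.card = e + 1 + 1} | ∃ y : t, (s : Finset V) = ↑(σ y)}
            rw [h1] at hc₂
            refine Submodule.span_le.2 ?_ hc₂
            rintro _ ⟨s, ⟨y, hy⟩, rfl⟩
            exact Submodule.subset_span ⟨y, by rw [Subtype.ext hy]⟩
          obtain ⟨l, hl⟩ := Finsupp.mem_span_range_iff_exists_finsupp.1 hc₂span
          have hbc : bdry F F V e (c₁ + c₂) = 0 := hcyc
          have hπc₂ : π (bdry F F V e c₂) = 0 := by
            have hπc₁ : π (bdry F F V e c₁) = 0 := by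
              rw [hπ, Submodule.mkQ_apply, Submodule.Quotient.mk_eq_zero]
              exact ⟨c₁, hc₁, rfl⟩
            have h2 : π (bdry F F V e c₁) + π (bdry F F V e c₂) = 0 := by
              rw [← map_add, ← map_add, hbc, map_zero]
            rw [hπc₁, zero_add] at h2
            exact h2
          have hsum : bdry F F V e c₂ = l.sum fun y a => a • w (σ y) := by
            rw [← hl, map_finsuppSum]
            refine Finsupp.sum_congr fun y _ => ?_
            rw [map_smul]
          have hπsum : π (bdry F F V e c₂)
              = l.sum fun y a => a • (y : Chains F V e ⧸ Bd) := by
            rw [hsum, map_finsuppSum]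
            refine Finsupp.sum_congr fun y _ => ?_
            rw [map_smul, hσπ]
          have hlzero : l = 0 := by
            apply linearIndependent_iff.1 hli
            rw [Finsupp.linearCombination_apply, ← hπsum]
            exact hπc₂
          have hc₂0 : c₂ = 0 := by rw [← hl, hlzero, Finsupp.sum_zero_index]
          exact ⟨hcyc, by rw [hc₂0, add_zero]; exact hc₁⟩
        · intro c hc
          unfold cyclesIn at hc ⊢
          rw [Submodule.mem_inf] at hc ⊢
          exact ⟨hc.1, chainsIn_mono hKsub _ hc.2⟩
      -- assemble
      refine ⟨K', hcplx, hKsub, hvert, hcard, ?_, ?_⟩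
      · -- vanishing in degrees ≤ e
        intro i hi
        unfold RedHVanish
        split_ifs with h1 h2
        · exact ⟨s₀, hKsub hs₀⟩
        · have hn : i.toNat ≤ e := by omega
          refine redH_subsingleton (fun c hc => ?_)
          unfold cyclesIn at hc
          rw [Submodule.mem_inf] at hc
          obtain ⟨hcyc, hch⟩ := hc
          have hchF : c ∈ chainsIn F F V (fullOn K) i.toNat := (hch_low i.toNat hn) ▸ hch
          have hb := cycle_eq_bdry_cone v₀ hcyc
          have hbmem : cone v₀ i.toNat c ∈ chainsIn F F V (fullOn K) (i.toNat + 1) :=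
            cone_mem_chainsIn v₀ hv₀ hchF
          rcases lt_or_eq_of_le hn with hlt | heq
          · exact ⟨cone v₀ i.toNat c, (hch_low (i.toNat + 1) (by omega)) ▸ hbmem, hb⟩
          · subst heq
            -- top case: use the chosen simplices
            have h1 : π c ∈ Submodule.span F A := by
              have hmap : π c ∈ Submodule.map (π.comp (bdry F F V i.toNat))
                  (chainsIn F F V (fullOn K) (i.toNat + 1)) :=
                ⟨cone v₀ i.toNat c, hbmem, by rw [LinearMap.comp_apply, hb]⟩
              rw [chainsIn, Finsupp.supported_eq_span_single, Submodule.map_span] at hmap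
              refine Submodule.span_le.2 ?_ hmap
              rintro _ ⟨_, ⟨s, hs, rfl⟩, rfl⟩
              exact Submodule.subset_span ⟨s, hs, rfl⟩
            rw [← hsp] at h1
            have h2 : Submodule.span F t ≤ Submodule.map π
                (Submodule.span F (Set.range fun y : t => w (σ y))) := by
              refine Submodule.span_le.2 fun y hy => ?_
              exact ⟨w (σ ⟨y, hy⟩), Submodule.subset_span ⟨⟨y, hy⟩, rfl⟩, hσπ ⟨y, hy⟩⟩
            obtain ⟨m, hm, hmq⟩ := h2 h1
            have hcm : c - m ∈ Bd := by
              rw [← Submodule.Quotient.mk_eq_zero Bd]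
              have : π (c - m) = 0 := by rw [map_sub, hmq, sub_self]
              exact this
            have h4 : Submodule.span F (Set.range fun y : t => w (σ y))
                ≤ boundariesIn F F V K' i.toNat := by
              refine Submodule.span_le.2 ?_
              rintro _ ⟨y, rfl⟩
              exact ⟨Finsupp.single (σ y) 1,
                single_mem_chainsIn (Or.inr ⟨y, rfl⟩) 1, rfl⟩
            have h5 : Bd ≤ boundariesIn F F V K' i.toNat :=
              Submodule.map_mono (chainsIn_mono hKsub _)
            have : c = m + (c - m) := by abel
            rw [this]
            exact Submodule.add_mem _ (h4 hm) (h5 hcm)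
      · -- isomorphisms in degrees ≥ e + 1
        intro i hi
        rcases lt_or_eq_of_le hi with hlt | heq
        · -- i ≥ e + 2
          have h1 : cyclesIn F F V K' i = cyclesIn F F V K i := by
            unfold cyclesIn
            rw [hch_high i (by omega)]
          have h2 : boundariesIn F F V K' i = boundariesIn F F V K i := by
            unfold boundariesIn
            rw [hch_high (i + 1) (by omega)]
          exact redH_transport h1 h2
        · subst heq
          have h2 : boundariesIn F F V K' (e + 1) = boundariesIn F F V K (e + 1) := by
            unfold boundariesIn
            rw [hch_high (e + 1 + 1) (by omega)]
          exact redH_transport hZmid h2
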